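/- Let H be a graph, let ℓ and p be positive integers, and set k = ℓp + ℓ + p. Let G be the graph obtained from H by attaching p pendant vertices (new vertices of degree 1) to each vertex of H and then adding k + 1 pairwise disjoint copies of the star K_{1, k−p−1}. Then vi(G) ≤ k if and only if there exists S ⊆ V(H) with |S| ≤ p such that every connected component of H − S has at most ℓ vertices. -/

import Mathlib

namespace VI

open SimpleGraph

variable {V : Type*}

/-- Total weight of a set of vertices. -/
noncomputable def setWeight (w : V → ℕ) (X : Set V) : ℕ := ∑ᶠ v ∈ X, w v

/-- Maximum weight of a connected component of `G − S`. -/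
noncomputable def compMax (G : SimpleGraph V) (w : V → ℕ) (S : Set V) : ℕ :=
  sSup {n | ∃ C : (G.induce Sᶜ).ConnectedComponent, n = setWeight w (Subtype.val '' C.supp)}

/-- `w(S) + max_{C ∈ cc(G−S)} w(V(C))`. -/
noncomputable def viCost (G : SimpleGraph V) (w : V → ℕ) (S : Set V) : ℕ :=
  setWeight w S + compMax G w S

/-- The weighted vertex integrity of `G`. -/
noncomputable def wvi (G : SimpleGraph V) (w : V → ℕ) : ℕ := ⨅ S : Set V, viCost G w S

/-- Maximum number of vertices of a connected component of `G − S`. -/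
noncomputable def uCompMax (G : SimpleGraph V) (S : Set V) : ℕ :=
  sSup {n | ∃ C : (G.induce Sᶜ).ConnectedComponent, n = C.supp.ncard}

/-- `|S| + max_{C ∈ cc(G−S)} |V(C)|`. -/
noncomputable def uViCost (G : SimpleGraph V) (S : Set V) : ℕ := S.ncard + uCompMax G S

/-- The (unweighted) vertex integrity of `G`. -/
noncomputable def uvi (G : SimpleGraph V) : ℕ := ⨅ S : Set V, uViCost G S

/-- A vertex `v` is redundant w.r.t. `S` if at most one connected component of `G − S`
contains a neighbor of `v`. -/
def Redundant (G : SimpleGraph V) (S : Set V) (v : V) : Prop :=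
  {C : (G.induce Sᶜ).ConnectedComponent | ∃ u : (Sᶜ : Set V), G.Adj v ↑u ∧ u ∈ C.supp}.Subsingleton

/-- `S` is irredundant if it contains no redundant vertex. -/
def Irredundant (G : SimpleGraph V) (S : Set V) : Prop := ∀ v ∈ S, ¬ Redundant G S v

end VI

namespace VI

/-- Vertices of the graph `G` built from `H`: the original vertices, `p` pendant vertices
attached to each original vertex, and `k + 1` copies of the star `K_{1, k-p-1}`
(`(j, none)` is the center of the `j`-th star and `(j, some i)` one of its leaves). -/
def PendVertex (V : Type*) (p k : ℕ) : Type _ :=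
  V ⊕ (V × Fin p) ⊕ (Fin (k + 1) × Option (Fin (k - p - 1)))

/-- The edges of the construction: the edges of `H`, a pendant edge from each pendant
vertex to its original vertex, and the star edges. -/
def pendRel {V : Type*} (H : SimpleGraph V) (p k : ℕ) :
    PendVertex V p k → PendVertex V p k → Prop
  | .inl u, .inl v => H.Adj u v
  | .inl u, .inr (.inl (v, _)) => u = v
  | .inr (.inr (j, none)), .inr (.inr (j', some _)) => j = j'
  | _, _ => False

/-- The graph obtained from `H` by attaching `p` pendant vertices to each vertex of `H`
and adding `k + 1` disjoint copies of `K_{1, k-p-1}`. -/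
def pendGraph {V : Type*} (H : SimpleGraph V) (p k : ℕ) : SimpleGraph (PendVertex V p k) :=
  SimpleGraph.fromRel (pendRel H p k)

end VI

namespace VI
open SimpleGraph

instance instFinitePendVertex {V : Type*} [Finite V] {p k : ℕ} : Finite (PendVertex V p k) :=
  inferInstanceAs (Finite (V ⊕ (V × Fin p) ⊕ (Fin (k + 1) × Option (Fin (k - p - 1)))))

section Helpers
variable {W : Type*} {G : SimpleGraph W}

lemma mem_of_walk {T : Set W} (hT : ∀ a ∈ T, ∀ b, G.Adj a b → b ∈ T) :
    ∀ {x y : W}, G.Walk x y → x ∈ T → y ∈ T := by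
  intro x y w
  induction w with
  | nil => exact id
  | cons h' _ ih => exact fun hx => ih (hT _ hx _ h')

lemma mem_of_reachable {T : Set W} (hT : ∀ a ∈ T, ∀ b, G.Adj a b → b ∈ T) {x y : W}
    (hx : x ∈ T) (h : G.Reachable x y) : y ∈ T :=
  h.elim fun w => mem_of_walk hT w hx

lemma mem_val_supp_of_reachable {S : Set W} {x y : ↥(Sᶜ)}
    (h : (G.induce Sᶜ).Reachable x y) :
    (y : W) ∈ Subtype.val '' ((G.induce Sᶜ).connectedComponentMk x).supp :=
  ⟨y, by rw [ConnectedComponent.mem_supp_iff, ConnectedComponent.eq]; exact h.symm, rfl⟩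

lemma supp_ncard_le {S : Set W} (x : ↥(Sᶜ)) (T : Set W)
    (hT : T.Finite) (hx : (x : W) ∈ T)
    (hcl : ∀ a ∈ T, a ∉ S → ∀ b, b ∉ S → G.Adj a b → b ∈ T) :
    ((G.induce Sᶜ).connectedComponentMk x).supp.ncard ≤ T.ncard := by
  have hsub : Subtype.val '' ((G.induce Sᶜ).connectedComponentMk x).supp ⊆ T := by
    rintro _ ⟨y, hy, rfl⟩
    rw [ConnectedComponent.mem_supp_iff, ConnectedComponent.eq] at hy
    refine mem_of_reachable (T := Subtype.val ⁻¹' T) ?_ hx hy.symm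
    rintro ⟨a, ha⟩ haT ⟨b, hb⟩ hadj
    exact hcl a haT ha b hb hadj
  calc ((G.induce Sᶜ).connectedComponentMk x).supp.ncard
      = (Subtype.val '' ((G.induce Sᶜ).connectedComponentMk x).supp).ncard :=
        (Set.ncard_image_of_injective _ Subtype.val_injective).symm
    _ ≤ T.ncard := Set.ncard_le_ncard hsub hT

lemma ncard_sprod {α β : Type*} (s : Set α) (t : Set β) :
    (s ×ˢ t).ncard = s.ncard * t.ncard := by
  rw [← Nat.card_coe_set_eq, ← Nat.card_coe_set_eq, ← Nat.card_coe_set_eq,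
    ← Nat.card_prod]
  exact Nat.card_congr (Equiv.Set.prod s t)

end Helpers

section Adj
variable {V : Type*} {H : SimpleGraph V} {p k : ℕ}

lemma pend_adj_inl_inl {u v : V} :
    (pendGraph H p k).Adj (Sum.inl u) (Sum.inl v) ↔ H.Adj u v := by
  refine (fromRel_adj _ _ _).trans ?_
  constructor
  · rintro ⟨hne, h | h⟩
    · exact h
    · exact h.symm
  · exact fun h => ⟨fun he => h.ne (by injection he), Or.inl h⟩

lemma pend_adj_inl_pend (u v : V) (i : Fin p) :
    (pendGraph H p k).Adj (Sum.inl u) (Sum.inr (Sum.inl (v, i))) ↔ u = v := by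
  refine (fromRel_adj _ _ _).trans ?_
  constructor
  · rintro ⟨hne, h | h⟩
    · exact h
    · exact h.elim
  · rintro rfl; exact ⟨fun he => by injection he, Or.inl rfl⟩

lemma pend_adj_star (j : Fin (k + 1)) (i : Fin (k - p - 1)) :
    (pendGraph H p k).Adj (Sum.inr (Sum.inr (j, none))) (Sum.inr (Sum.inr (j, some i))) := by
  refine (fromRel_adj _ _ _).mpr ?_
  exact ⟨fun he => by injection he with h1; injection h1 with h2; simp at h2, Or.inl rfl⟩

lemma pend_adj_cases {a b : PendVertex V p k} (h : (pendGraph H p k).Adj a b) :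
    (∃ u v, a = .inl u ∧ b = .inl v ∧ H.Adj u v) ∨
    (∃ u i, a = .inl u ∧ b = .inr (.inl (u, i))) ∨
    (∃ u i, b = .inl u ∧ a = .inr (.inl (u, i))) ∨
    (∃ j x y, a = .inr (.inr (j, x)) ∧ b = .inr (.inr (j, y))) := by
  rw [pendGraph, fromRel_adj] at h
  obtain ⟨hne, h | h⟩ := h
  · rcases a with u | ⟨v, i⟩ | ⟨j, _ | ix⟩ <;> rcases b with u' | ⟨v', i'⟩ | ⟨j', _ | iy⟩
    · exact Or.inl ⟨u, u', rfl, rfl, h⟩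
    · exact Or.inr (Or.inl ⟨u, i', rfl, by rw [show u = v' from h]⟩)
    · exact (h : False).elim
    · exact (h : False).elim
    · exact (h : False).elim
    · exact (h : False).elim
    · exact (h : False).elim
    · exact (h : False).elim
    · exact (h : False).elim
    · exact (h : False).elim
    · exact (h : False).elim
    · exact Or.inr (Or.inr (Or.inr ⟨j, none, some iy, rfl, by rw [show j = j' from h]⟩))
    · exact (h : False).elim
    · exact (h : False).elim
    · exact (h : False).elim
    · exact (h : False).elim
  · rcases a with u | ⟨v, i⟩ | ⟨j, _ | ix⟩ <;> rcases b with u' | ⟨v', i'⟩ | ⟨j', _ | iy⟩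
    · exact Or.inl ⟨u, u', rfl, rfl, h.symm⟩
    · exact (h : False).elim
    · exact (h : False).elim
    · exact (h : False).elim
    · exact Or.inr (Or.inr (Or.inl ⟨u', i, rfl, by rw [show u' = v from h]⟩))
    · exact (h : False).elim
    · exact (h : False).elim
    · exact (h : False).elim
    · exact (h : False).elim
    · exact (h : False).elim
    · exact (h : False).elim
    · exact (h : False).elim
    · exact (h : False).elim
    · exact (h : False).elim
    · exact Or.inr (Or.inr (Or.inr ⟨j', some ix, none, by rw [show j' = j from h], rfl⟩))
    · exact (h : False).elim

end Adj
end VI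

namespace VI
open SimpleGraph

lemma arith {l p k b t s M : ℕ} (h1 : b + (b * p - t) ≤ M) (h2 : t ≤ b * p)
    (h3 : t ≤ s) (h4 : s + M ≤ k) (hkk : k = l * p + l + p) : b ≤ l := by
  by_contra hb
  push_neg at hb
  have h5 : l * p + p ≤ b * p := by
    calc l * p + p = (l + 1) * p := by ring
      _ ≤ b * p := Nat.mul_le_mul_right p hb
  have e : (b * p - t) + t = b * p := Nat.sub_add_cancel h2
  linarith

lemma bddAbove_suppSet {W : Type*} [Finite W] (G : SimpleGraph W) (S : Set W) :
    BddAbove {n | ∃ C : (G.induce Sᶜ).ConnectedComponent, n = C.supp.ncard} := by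
  refine ⟨Nat.card ↥(Sᶜ), ?_⟩
  rintro n ⟨C, rfl⟩
  have := Set.ncard_le_ncard (Set.subset_univ C.supp) Set.finite_univ
  simpa [Set.ncard_univ] using this

lemma starcard {V : Type*} {p k : ℕ} (hpk : p + 1 ≤ k) (j : Fin (k + 1)) :
    (Set.range (fun o : Option (Fin (k - p - 1)) =>
      (Sum.inr (Sum.inr (j, o)) : PendVertex V p k))).ncard = k - p := by
  rw [← Set.image_univ, Set.ncard_image_of_injective _
    (fun o o' he => by
      injection he with h; injection h with h1; injection h1), Set.ncard_univ]
  simp only [Nat.card_eq_fintype_card, Fintype.card_option, Fintype.card_fin]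
  omega

end VI

open VI SimpleGraph in
/-- `vi(G) ≤ k` iff `H` has a set of at most `p` vertices whose removal leaves components
with at most `l` vertices, where `k = l·p + l + p`. -/
theorem statement10 {V : Type*} [Fintype V] (H : SimpleGraph V) (l p k : ℕ)
    (hl : 0 < l) (hp : 0 < p) (hk : k = l * p + l + p) :
    uvi (pendGraph H p k) ≤ k ↔
      ∃ S : Set V, S.ncard ≤ p ∧
        ∀ C : (H.induce Sᶜ).ConnectedComponent, C.supp.ncard ≤ l := by
  have hkp2 : p + 2 ≤ k := by nlinarith
  constructor
  · intro h
    obtain ⟨S', hS'⟩ : ∃ S' : Set (PendVertex V p k),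
        uViCost (pendGraph H p k) S' ≤ k := by
      obtain ⟨S', hS'⟩ := Nat.sInf_mem (Set.range_nonempty (uViCost (pendGraph H p k)))
      exact ⟨S', by rw [hS']; exact h⟩
    simp only [uViCost] at hS'
    -- some star is untouched
    obtain ⟨j, hj⟩ : ∃ j : Fin (k + 1),
        ∀ o, (Sum.inr (Sum.inr (j, o)) : PendVertex V p k) ∉ S' := by
      by_contra hc
      push_neg at hc
      choose f hf using hc
      have hinj : Function.Injective
          (fun j => (Sum.inr (Sum.inr (j, f j)) : PendVertex V p k)) := by
        intro j j' he
        injection he with h1; injection h1 with h2; injection h2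
      have hge : (k + 1) ≤ S'.ncard := by
        have h1 : (Set.range fun j => (Sum.inr (Sum.inr (j, f j)) : PendVertex V p k)).ncard
            = k + 1 := by
          rw [← Set.image_univ, Set.ncard_image_of_injective _ hinj, Set.ncard_univ]
          simp
        rw [← h1]
        exact Set.ncard_le_ncard (by rintro _ ⟨j, rfl⟩; exact hf j) (Set.toFinite _)
      omega
    -- hence the deletion set is small
    have hcomp_ge : k - p ≤ uCompMax (pendGraph H p k) S' := by
      have hc : (Sum.inr (Sum.inr (j, none)) : PendVertex V p k) ∈ S'ᶜ := hj none
      have hsub : Set.range (fun o : Option (Fin (k - p - 1)) =>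
            (Sum.inr (Sum.inr (j, o)) : PendVertex V p k)) ⊆
          Subtype.val '' (((pendGraph H p k).induce S'ᶜ).connectedComponentMk
            ⟨_, hc⟩).supp := by
        rintro _ ⟨o, rfl⟩
        refine mem_val_supp_of_reachable (y := ⟨_, hj o⟩) ?_
        cases o with
        | none => exact Reachable.refl _
        | some i =>
            exact Adj.reachable
              (show (pendGraph H p k).Adj _ _ from pend_adj_star j i)
      have hle : k - p ≤ (((pendGraph H p k).induce S'ᶜ).connectedComponentMk
          ⟨_, hc⟩).supp.ncard := by
        rw [← Set.ncard_image_of_injective _ Subtype.val_injective]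
        calc k - p = _ := (starcard (V := V) (by omega) j).symm
          _ ≤ _ := Set.ncard_le_ncard hsub (Set.toFinite _)
      exact le_trans hle (le_csSup (bddAbove_suppSet _ _) ⟨_, rfl⟩)
    have hS'p : S'.ncard ≤ p := by omega
    set S : Set V := Sum.inl ⁻¹' S' with hSdef
    refine ⟨S, ?_, ?_⟩
    · refine le_trans ?_ hS'p
      rw [← Set.ncard_image_of_injective S Sum.inl_injective]
      exact Set.ncard_le_ncard (Set.image_preimage_subset _ _) (Set.toFinite _)
    · intro C
      obtain ⟨u, rfl⟩ := C.exists_rep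
      have hu' : (Sum.inl u.val : PendVertex V p k) ∈ S'ᶜ := u.property
      set B : Set V := Subtype.val '' ((H.induce Sᶜ).connectedComponentMk u).supp with hB
      have hgoal_eq : ((H.induce Sᶜ).connectedComponentMk u).supp.ncard = B.ncard :=
        (Set.ncard_image_of_injective _ Subtype.val_injective).symm
      refine le_trans (le_of_eq hgoal_eq) ?_
      -- every vertex of B, with inl, lies in the big component D
      have hmap : ∀ y : ↥(Sᶜ), y ∈ ((H.induce Sᶜ).connectedComponentMk u).supp →
          (Sum.inl y.val : PendVertex V p k) ∈ Subtype.val ''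
            (((pendGraph H p k).induce S'ᶜ).connectedComponentMk
              ⟨Sum.inl u.val, hu'⟩).supp := by
        intro y hy
        rw [ConnectedComponent.mem_supp_iff, ConnectedComponent.eq] at hy
        exact mem_val_supp_of_reachable
          (Reachable.map
            ⟨fun z : ↥(Sᶜ) => (⟨Sum.inl z.val, z.property⟩ : ↥(S'ᶜ)),
              fun hab => (pend_adj_inl_inl (H := H) (p := p) (k := k)).2 hab⟩ hy.symm)
      have hpend : ∀ v ∈ B, ∀ i : Fin p,
          (Sum.inr (Sum.inl (v, i)) : PendVertex V p k) ∉ S' →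
          (Sum.inr (Sum.inl (v, i)) : PendVertex V p k) ∈ Subtype.val ''
            (((pendGraph H p k).induce S'ᶜ).connectedComponentMk
              ⟨Sum.inl u.val, hu'⟩).supp := by
        rintro _ ⟨y, hy, rfl⟩ i hpS
        rw [ConnectedComponent.mem_supp_iff, ConnectedComponent.eq] at hy
        refine mem_val_supp_of_reachable (y := ⟨_, hpS⟩) ?_
        refine Reachable.trans
          (Reachable.map
            ⟨fun z : ↥(Sᶜ) => (⟨Sum.inl z.val, z.property⟩ : ↥(S'ᶜ)),
              fun hab => (pend_adj_inl_inl (H := H) (p := p) (k := k)).2 hab⟩ hy.symm) ?_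
        exact Adj.reachable
          (show (pendGraph H p k).Adj _ _ from (pend_adj_inl_pend y.val y.val i).2 rfl)
      -- counting
      set P : Set (PendVertex V p k) :=
        (fun q : V × Fin p => Sum.inr (Sum.inl q)) '' (B ×ˢ Set.univ) with hP
      have hPcard : P.ncard = B.ncard * p := by
        rw [hP]
        show ((fun q : V × Fin p => (Sum.inr (Sum.inl q) : PendVertex V p k)) ''
          (B ×ˢ Set.univ)).ncard = B.ncard * p
        rw [Set.ncard_image_of_injective (B ×ˢ Set.univ)
            (f := fun q : V × Fin p => (Sum.inr (Sum.inl q) : PendVertex V p k))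
            (fun q q' he => by injection he with h; injection h),
          ncard_sprod, Set.ncard_univ]
        simp only [Nat.card_eq_fintype_card, Fintype.card_fin]
      have hdisjU : Disjoint (Sum.inl '' B) (P \ S') := by
        rw [Set.disjoint_left]
        rintro _ ⟨v, -, rfl⟩ ⟨⟨q, -, hq⟩, -⟩
        injection hq
      have hUsub : (Sum.inl '' B) ∪ (P \ S') ⊆ Subtype.val ''
          (((pendGraph H p k).induce S'ᶜ).connectedComponentMk
            ⟨Sum.inl u.val, hu'⟩).supp := by
        rintro x (⟨v, hvB, rfl⟩ | ⟨hxP, hxS⟩)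
        · obtain ⟨y, hy, rfl⟩ := hvB
          exact hmap y hy
        · obtain ⟨⟨v, i⟩, ⟨hvB, -⟩, rfl⟩ := hxP
          exact hpend v hvB i hxS
      have hUcard : B.ncard + (P \ S').ncard ≤ uCompMax (pendGraph H p k) S' := by
        have h1 : ((Sum.inl '' B) ∪ (P \ S')).ncard ≤
            (Subtype.val '' (((pendGraph H p k).induce S'ᶜ).connectedComponentMk
              ⟨Sum.inl u.val, hu'⟩).supp).ncard :=
          Set.ncard_le_ncard hUsub (Set.toFinite _)
        rw [Set.ncard_union_eq hdisjU (Set.toFinite _) (Set.toFinite _),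
          Set.ncard_image_of_injective _ Sum.inl_injective,
          Set.ncard_image_of_injective
            ((((pendGraph H p k).induce S'ᶜ).connectedComponentMk
              ⟨Sum.inl u.val, hu'⟩).supp) Subtype.val_injective] at h1
        exact le_trans h1 (le_csSup (bddAbove_suppSet _ _) ⟨_, rfl⟩)
      have hdiffP : (P \ S').ncard = P.ncard - (P ∩ S').ncard := by
        rw [show P \ S' = P \ (P ∩ S') by ext x; simp,
          Set.ncard_diff Set.inter_subset_left (Set.toFinite _)]
      have ht1 : (P ∩ S').ncard ≤ S'.ncard :=
        Set.ncard_le_ncard Set.inter_subset_right (Set.toFinite _)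
      have ht2 : (P ∩ S').ncard ≤ P.ncard :=
        Set.ncard_le_ncard Set.inter_subset_left (Set.toFinite _)
      refine arith (t := (P ∩ S').ncard) (s := S'.ncard)
        (M := uCompMax (pendGraph H p k) S') ?_ ?_ ht1 hS' hk
      · rw [← hPcard, ← hdiffP]; exact hUcard
      · rw [← hPcard]; exact ht2
  · rintro ⟨S, hScard, hScomp⟩
    set S' : Set (PendVertex V p k) := Sum.inl '' S with hS'def
    -- the key bound for components containing an original vertex or its pendant
    have key : ∀ (u : V) (hu : u ∉ S) (xv : PendVertex V p k) (hxv : xv ∈ S'ᶜ),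
        (xv = Sum.inl u ∨ ∃ i : Fin p, xv = Sum.inr (Sum.inl (u, i))) →
        (((pendGraph H p k).induce S'ᶜ).connectedComponentMk ⟨xv, hxv⟩).supp.ncard ≤ k - p := by
      intro u hu xv hxv hcase
      set B : Set V :=
        Subtype.val '' ((H.induce Sᶜ).connectedComponentMk ⟨u, hu⟩).supp with hB
      have huB : u ∈ B := ⟨⟨u, hu⟩, rfl, rfl⟩
      have hBl : B.ncard ≤ l := by
        rw [hB, Set.ncard_image_of_injective _ Subtype.val_injective]
        exact hScomp _
      have hBcl : ∀ v ∈ B, ∀ w, w ∉ S → H.Adj v w → w ∈ B := by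
        rintro v hv w hw hadj
        rw [hB] at hv ⊢
        obtain ⟨y, hy, rfl⟩ := hv
        refine ⟨⟨w, hw⟩, ?_, rfl⟩
        rw [ConnectedComponent.mem_supp_iff] at hy ⊢
        rw [← hy, ConnectedComponent.eq]
        exact Adj.reachable (show (H.induce Sᶜ).Adj ⟨w, hw⟩ y from hadj.symm)
      set T : Set (PendVertex V p k) :=
        (Sum.inl '' B) ∪ ((fun q : V × Fin p => Sum.inr (Sum.inl q)) '' (B ×ˢ Set.univ))
        with hT
      have hxT : xv ∈ T := by
        rcases hcase with rfl | ⟨i, rfl⟩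
        · exact Or.inl ⟨u, huB, rfl⟩
        · exact Or.inr ⟨(u, i), ⟨huB, trivial⟩, rfl⟩
      have hcl : ∀ a ∈ T, a ∉ S' → ∀ b, b ∉ S' → (pendGraph H p k).Adj a b → b ∈ T := by
        rintro a haT - b hbS hadj
        have hbS' : ∀ w : V, b = Sum.inl w → w ∉ S := by
          rintro w rfl hw; exact hbS ⟨w, hw, rfl⟩
        rcases haT with ⟨v, hvB, rfl⟩ | ⟨⟨v, i⟩, ⟨hvB, -⟩, rfl⟩
        · rcases pend_adj_cases hadj with ⟨u₀, v₀, h1, rfl, h3⟩ | ⟨u₀, i₀, h1, rfl⟩ |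
            ⟨u₀, i₀, h1, h2⟩ | ⟨j₀, x₀, y₀, h1, h2⟩
          · injection h1 with h1; subst h1
            exact Or.inl ⟨v₀, hBcl v hvB v₀ (hbS' v₀ rfl) h3, rfl⟩
          · injection h1 with h1; subst h1
            exact Or.inr ⟨(v, i₀), ⟨hvB, trivial⟩, rfl⟩
          · exact absurd h2 (by intro hh; injection hh)
          · exact absurd h1 (by intro hh; injection hh)
        · rcases pend_adj_cases hadj with ⟨u₀, v₀, h1, h2, h3⟩ | ⟨u₀, i₀, h1, h2⟩ |
            ⟨u₀, i₀, rfl, h2⟩ | ⟨j₀, x₀, y₀, h1, h2⟩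
          · exact absurd h1 (by intro hh; injection hh)
          · exact absurd h1 (by intro hh; injection hh)
          · injection h2 with h2; injection h2 with h2; injection h2 with h2a h2b
            subst h2a
            exact Or.inl ⟨v, hvB, rfl⟩
          · exact absurd h1 (by intro hh; injection hh with hh; injection hh)
      have hTcard : T.ncard ≤ k - p := by
        have hdisj : Disjoint (Sum.inl '' B)
            ((fun q : V × Fin p => (Sum.inr (Sum.inl q) : PendVertex V p k)) ''
              (B ×ˢ Set.univ)) := by
          rw [Set.disjoint_left]
          rintro _ ⟨v, -, rfl⟩ ⟨q, -, hq⟩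
          injection hq
        rw [hT]
        show ((Sum.inl '' B : Set (PendVertex V p k)) ∪
          ((fun q : V × Fin p => (Sum.inr (Sum.inl q) : PendVertex V p k)) ''
            (B ×ˢ Set.univ))).ncard ≤ k - p
        have e0 := Set.ncard_union_eq hdisj (Set.toFinite _) (Set.toFinite _)
        have e1 : (Sum.inl '' B : Set (PendVertex V p k)).ncard = B.ncard :=
          Set.ncard_image_of_injective _ Sum.inl_injective
        have e2 : ((fun q : V × Fin p => (Sum.inr (Sum.inl q) : PendVertex V p k)) ''
            (B ×ˢ Set.univ)).ncard = B.ncard * p := by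
          rw [Set.ncard_image_of_injective (B ×ˢ Set.univ)
              (f := fun q : V × Fin p => (Sum.inr (Sum.inl q) : PendVertex V p k))
              (fun q q' he => by injection he with h; injection h),
            ncard_sprod, Set.ncard_univ]
          simp only [Nat.card_eq_fintype_card, Fintype.card_fin]
        refine le_trans (le_of_eq e0) ?_
        refine le_trans (le_of_eq (congrArg₂ (· + ·) e1 e2)) ?_
        have h1 : B.ncard * p ≤ l * p := Nat.mul_le_mul_right p hBl
        have h2 : k - p = l * p + l := by omega
        rw [h2]
        linarith
      exact le_trans (supp_ncard_le ⟨xv, hxv⟩ T (Set.toFinite T) hxT hcl) hTcard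
    have hcomp : uCompMax (pendGraph H p k) S' ≤ k - p := by
      apply csSup_le'
      rintro n ⟨D, rfl⟩
      obtain ⟨⟨xv, hxv⟩, rfl⟩ := D.exists_rep
      rcases xv with u | ⟨v, i⟩ | ⟨j, o⟩
      · have hu : u ∉ S := fun hu => hxv ⟨u, hu, rfl⟩
        exact key u hu _ hxv (Or.inl rfl)
      · by_cases hv : v ∈ S
        · -- isolated pendant
          refine le_trans (supp_ncard_le _ {Sum.inr (Sum.inl (v, i))} (Set.toFinite _)
            rfl ?_) ?_
          · rintro a ha - b hbS hadj
            rw [Set.mem_singleton_iff] at ha; subst ha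
            rcases pend_adj_cases hadj with ⟨u₀, v₀, h1, h2, h3⟩ | ⟨u₀, i₀, h1, h2⟩ |
              ⟨u₀, i₀, rfl, h2⟩ | ⟨j₀, x₀, y₀, h1, h2⟩
            · exact absurd h1 (by intro hh; injection hh)
            · exact absurd h1 (by intro hh; injection hh)
            · injection h2 with h2; injection h2 with h2; injection h2 with h2a h2b
              subst h2a
              exact absurd (⟨v, hv, rfl⟩ : Sum.inl v ∈ S') hbS
            · exact absurd h1 (by intro hh; injection hh with hh; injection hh)
          · rw [Set.ncard_singleton]; omega
        · exact key v hv _ hxv (Or.inr ⟨i, rfl⟩)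
      · -- star component
        refine le_trans (supp_ncard_le _ (Set.range (fun o' : Option (Fin (k - p - 1)) =>
            (Sum.inr (Sum.inr (j, o')) : PendVertex V p k))) (Set.toFinite _)
            ⟨o, rfl⟩ ?_) ?_
        · rintro a ⟨o₁, rfl⟩ - b hbS hadj
          rcases pend_adj_cases hadj with ⟨u₀, v₀, h1, h2, h3⟩ | ⟨u₀, i₀, h1, h2⟩ |
            ⟨u₀, i₀, h1, h2⟩ | ⟨j₀, x₀, y₀, h1, rfl⟩
          · exact absurd h1 (by intro hh; injection hh)
          · exact absurd h1 (by intro hh; injection hh)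
          · exact absurd h2 (by intro hh; injection hh with hh; injection hh)
          · injection h1 with h1; injection h1 with h1; injection h1 with h1a h1b
            subst h1a
            exact ⟨y₀, rfl⟩
        · rw [starcard (by omega) j]
    have hS'card : S'.ncard = S.ncard := Set.ncard_image_of_injective _ Sum.inl_injective
    have h1 : uvi (pendGraph H p k) ≤ uViCost (pendGraph H p k) S' :=
      ciInf_le (OrderBot.bddBelow _) S'
    refine le_trans h1 ?_
    simp only [uViCost]
    omega
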